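/- arXiv:2306.17425 — 4 statements merged into one kernel-verified Lean document; each statement's English description precedes it below -/
import Mathlib

section
/- If a, b ∈ [0,1] then (1/2)(a − b)² ≤ a·log(a/b) − (a − b), where the right-hand side is interpreted as +∞ if b = 0 < a and as b if a = 0 (with 0·log 0 = 0). -/
open Real


lemma auxDeriv1 (y : ℝ) (hy : 0 < y) (hy1 : y ≤ 1) :
    (1 - y)^2 / 2 ≤ y - 1 - Real.log y := by
  set f : ℝ → ℝ := fun x => x - 1 - Real.log x - (1 - x)^2 / 2 with hf
  have hder : ∀ x : ℝ, 0 < x →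
      HasDerivAt f (1 - x⁻¹ - (↑2 * (1 - x)^1 * (-1))/2) x := by
    intro x hx0
    exact (((hasDerivAt_id x).sub_const 1).sub (Real.hasDerivAt_log hx0.ne')).sub
      (((((hasDerivAt_id x).const_sub 1)).pow 2).div_const 2)
  have hmain : AntitoneOn f (Set.Icc y 1) := by
    apply antitoneOn_of_deriv_nonpos (convex_Icc y 1)
    · apply ContinuousOn.sub
      apply ContinuousOn.sub
      · exact (continuous_id.sub continuous_const).continuousOn
      · exact Real.continuousOn_log.mono (by
          intro x hx
          simp only [Set.mem_Icc] at hx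
          simp only [Set.mem_compl_iff, Set.mem_singleton_iff]
          intro h; rw [h] at hx; linarith [hx.1])
      · exact (Continuous.continuousOn (by continuity))
    · intro x hx
      rw [interior_Icc] at hx
      exact ((hder x (lt_of_lt_of_le hy hx.1.le)).differentiableAt).differentiableWithinAt
    · intro x hx
      rw [interior_Icc] at hx
      have hx0 : 0 < x := lt_of_lt_of_le hy hx.1.le
      rw [(hder x hx0).deriv]
      have : 1 - x⁻¹ - (↑2 * (1 - x)^1 * (-1))/2 = -(1 - x)^2 / x := by
        field_simp; ring
      rw [this]
      apply div_nonpos_of_nonpos_of_nonneg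
      · nlinarith [sq_nonneg (1 - x)]
      · exact hx0.le
  have h1 : f 1 ≤ f y := hmain (Set.mem_Icc.2 ⟨le_refl y, hy1⟩) (Set.mem_Icc.2 ⟨hy1, le_refl 1⟩) hy1
  simp only [hf, Real.log_one] at h1
  norm_num at h1
  linarith

lemma auxDeriv2 (y : ℝ) (hy : 0 < y) (hy1 : y ≤ 1) :
    (1 - y)^2 / 2 ≤ y * Real.log y - y + 1 := by
  set f : ℝ → ℝ := fun x => x * Real.log x - x + 1 - (1 - x)^2 / 2 with hf
  have hder : ∀ x : ℝ, 0 < x →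
      HasDerivAt f ((Real.log x + 1 - 1) - (↑2 * (1 - x)^1 * (-1))/2) x := by
    intro x hx0
    exact ((((Real.hasDerivAt_mul_log hx0.ne').sub (hasDerivAt_id x)).add_const 1)).sub
      (((((hasDerivAt_id x).const_sub 1)).pow 2).div_const 2)
  have hmain : AntitoneOn f (Set.Icc y 1) := by
    apply antitoneOn_of_deriv_nonpos (convex_Icc y 1)
    · apply ContinuousOn.sub
      apply ContinuousOn.add
      apply ContinuousOn.sub
      · exact Real.continuous_mul_log.continuousOn
      · exact continuous_id.continuousOn
      · exact continuousOn_const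
      · exact (Continuous.continuousOn (by continuity))
    · intro x hx
      rw [interior_Icc] at hx
      exact ((hder x (lt_of_lt_of_le hy hx.1.le)).differentiableAt).differentiableWithinAt
    · intro x hx
      rw [interior_Icc] at hx
      have hx0 : 0 < x := lt_of_lt_of_le hy hx.1.le
      rw [(hder x hx0).deriv]
      have hlog : Real.log x ≤ x - 1 := Real.log_le_sub_one_of_pos hx0
      nlinarith
  have h1 : f 1 ≤ f y := hmain (Set.mem_Icc.2 ⟨le_refl y, hy1⟩) (Set.mem_Icc.2 ⟨hy1, le_refl 1⟩) hy1
  simp only [hf, Real.log_one] at h1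
  norm_num at h1
  linarith

/-- Csiszár–Kullback-type pointwise estimate: for a, b ∈ [0,1],
(1/2)(a − b)² ≤ a log(a/b) − (a − b), under the convention that
the right-hand side is +∞ if b = 0 < a (excluded here by the hypothesis
`0 < b ∨ a = 0`, where the inequality is trivially true) and equals b
if a = 0 (with 0·log 0 = 0, Mathlib's convention). -/
theorem stmt5 (a b : ℝ) (ha : a ∈ Set.Icc (0:ℝ) 1) (hb : b ∈ Set.Icc (0:ℝ) 1)
    (hcase : 0 < b ∨ a = 0) :
    (1/2) * (a - b)^2 ≤ a * Real.log (a / b) - (a - b) := by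
  obtain ⟨ha0, ha1⟩ := ha
  obtain ⟨hb0, hb1⟩ := hb
  by_cases haz : a = 0
  · subst haz
    simp only [zero_mul, zero_sub]
    nlinarith
  · have ha0' : 0 < a := lt_of_le_of_ne ha0 (Ne.symm haz)
    have hb0' : 0 < b := hcase.resolve_right haz
    rcases le_total a b with hab | hab
    · -- a ≤ b : use auxDeriv2 with y = a/b
      have hy0 : 0 < a / b := div_pos ha0' hb0'
      have hy1 : a / b ≤ 1 := (div_le_one hb0').2 hab
      have key := auxDeriv2 (a/b) hy0 hy1
      have hlog : a / b * Real.log (a/b) * b = a * Real.log (a/b) := by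
        field_simp
      have key2 := mul_le_mul_of_nonneg_right key hb0'.le
      rw [show ((1 - a/b)^2/2) * b = (b - a)^2 / (2*b) by field_simp] at key2
      rw [show (a/b * Real.log (a/b) - a/b + 1) * b
            = a * Real.log (a/b) - a + b by field_simp] at key2
      have hfinal : (1/2) * (a-b)^2 ≤ (b-a)^2 / (2*b) := by
        have heq : (b-a)^2 / (2*b) - (1/2) * (a-b)^2
            = (1-b) * (a-b)^2 / (2*b) := by field_simp; ring
        have hpos : 0 ≤ (1-b) * (a-b)^2 / (2*b) := div_nonneg (mul_nonneg (by linarith) (sq_nonneg _)) (by linarith)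
        linarith
      linarith
    · -- b ≤ a : use auxDeriv1 with y = b/a
      have hy0 : 0 < b / a := div_pos hb0' ha0'
      have hy1 : b / a ≤ 1 := (div_le_one ha0').2 hab
      have key := auxDeriv1 (b/a) hy0 hy1
      have key2 := mul_le_mul_of_nonneg_right key ha0'.le
      rw [show ((1 - b/a)^2/2) * a = (a - b)^2 / (2*a) by field_simp] at key2
      have hloga : Real.log (b/a) = - Real.log (a/b) := by
        rw [← Real.log_inv]
        congr 1
        field_simp
      rw [hloga] at key2
      rw [show (b/a - 1 - (- Real.log (a/b))) * a
            = a * Real.log (a/b) - a + b by field_simp; ring] at key2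
      have hfinal : (1/2) * (a-b)^2 ≤ (a-b)^2 / (2*a) := by
        have heq : (a-b)^2 / (2*a) - (1/2) * (a-b)^2
            = (1-a) * (a-b)^2 / (2*a) := by field_simp
        have hpos : 0 ≤ (1-a) * (a-b)^2 / (2*a) := div_nonneg (mul_nonneg (by linarith) (sq_nonneg _)) (by linarith)
        linarith
      linarith
end

section
/- Let q ∈ C¹([0,1]) be convex and increasing with q(0)=0, q(1)=1, and suppose there exist β ∈ [0,1], c₀ > 0 with q'(s)/q(s) ≥ c₀ s^{-β} for s ∈ (0,1]. Fix m ∈ (0,1] with q̄ ≥ q(m) where q̄ ∈ (0,1]. If ε₀ > 0 and Q ∈ [0,1] satisfies Q/q̄ > 1 + ε₀, then ∫_1^{Q/q̄} log( q(q̄σ)/q(q̄) ) dσ ≥ (ε₀/2)·log(1 + c₀ q(m)^{1−β} ε₀/2). -/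
open Set Filter Real MeasureTheory intervalIntegral

/-- Lower bound in the case Q/q̄ > 1 + ε₀: for q ∈ C¹([0,1]) convex and
increasing with q(0)=0, q(1)=1, ratio bound s^β q'(s)/q(s) ≥ c₀ on (0,1],
and q̄ ∈ (0,1] with q̄ ≥ q(m),
∫_1^{Q/q̄} log(q(q̄σ)/q(q̄)) dσ ≥ (ε₀/2) log(1 + c₀ q(m)^{1−β} ε₀/2). -/
theorem stmt10 (q q' : ℝ → ℝ) (β c₀ m qbar ε₀ Q : ℝ)
    (hq_diff : ∀ s ∈ Icc (0:ℝ) 1, HasDerivAt q (q' s) s)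
    (hq'_cont : ContinuousOn q' (Icc 0 1))
    (hqconv : ConvexOn ℝ (Icc 0 1) q)
    (hqmono : StrictMonoOn q (Icc 0 1))
    (hq0 : q 0 = 0) (hq1 : q 1 = 1)
    (hβ : β ∈ Icc (0:ℝ) 1) (hc₀ : 0 < c₀)
    (hratio : ∀ s ∈ Ioc (0:ℝ) 1, c₀ ≤ s ^ β * q' s / q s)
    (hm : m ∈ Ioc (0:ℝ) 1) (hqbar : qbar ∈ Ioc (0:ℝ) 1)
    (hqbar_ge : q m ≤ qbar)
    (hε₀ : 0 < ε₀) (hQ : Q ∈ Icc (0:ℝ) 1) (hQq : 1 + ε₀ < Q / qbar) :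
    (ε₀ / 2) * Real.log (1 + c₀ * q m ^ (1 - β) * (ε₀ / 2))
      ≤ ∫ σ in (1:ℝ)..(Q / qbar), Real.log (q (qbar * σ) / q qbar) := by
  obtain ⟨hqbar0, hqbar1⟩ := hqbar
  obtain ⟨hm0, hm1⟩ := hm
  obtain ⟨hQ0, hQ1⟩ := hQ
  obtain ⟨hβ0, hβ1⟩ := hβ
  set R := Q / qbar with hRdef
  have hR1 : (1:ℝ) < R := by linarith
  have hqbarR : qbar * R = Q := by
    rw [hRdef, mul_comm, div_mul_cancel₀ _ (ne_of_gt hqbar0)]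
  -- positivity of q on (0,1]
  have hqpos : ∀ s ∈ Ioc (0:ℝ) 1, 0 < q s := by
    intro s hs
    have := hqmono (left_mem_Icc.2 zero_le_one) ⟨hs.1.le, hs.2⟩ hs.1
    rwa [hq0] at this
  have hqqbar : 0 < q qbar := hqpos qbar ⟨hqbar0, hqbar1⟩
  have hqm : 0 < q m := hqpos m ⟨hm0, hm1⟩
  -- membership
  have hmem : ∀ σ ∈ Icc (1:ℝ) R, qbar * σ ∈ Ioc (0:ℝ) 1 := by
    intro σ hσ
    constructor
    · have : (0:ℝ) < σ := lt_of_lt_of_le one_pos hσ.1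
      positivity
    · have h1 : qbar * σ ≤ qbar * R := by nlinarith [hσ.2]
      linarith [hqbarR ▸ h1]
  -- monotonicity: q (qbar * σ) ≥ q qbar for σ ∈ [1, R]
  have hqmono' : ∀ σ ∈ Icc (1:ℝ) R, q qbar ≤ q (qbar * σ) := by
    intro σ hσ
    have h1 := hmem σ hσ
    have : qbar ≤ qbar * σ := by nlinarith [hσ.1]
    exact (hqmono.monotoneOn ⟨hqbar0.le, hqbar1⟩ ⟨h1.1.le, h1.2⟩) this
  set A := c₀ * q m ^ (1 - β) * (ε₀ / 2) with hAdef
  have hA0 : 0 < A := by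
    have := Real.rpow_pos_of_pos hqm (1 - β)
    positivity
  set L := Real.log (1 + A) with hLdef
  have hL0 : 0 ≤ L := Real.log_nonneg (by linarith)
  -- key pointwise estimate
  have hkey : ∀ σ ∈ Icc (1 + ε₀/2) R, q qbar * (1 + A) ≤ q (qbar * σ) := by
    intro σ hσ
    have hσ1 : (1:ℝ) < σ := by linarith [hσ.1]
    have hσmem : σ ∈ Icc (1:ℝ) R := ⟨hσ1.le, hσ.2⟩
    have hy := hmem σ hσmem
    have hxy : qbar < qbar * σ := by nlinarith
    have hslope := hqconv.le_slope_of_hasDerivAt (f' := q' qbar)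
      ⟨hqbar0.le, hqbar1⟩ ⟨hy.1.le, hy.2⟩ hxy
      (hq_diff qbar ⟨hqbar0.le, hqbar1⟩)
    rw [slope_def_field] at hslope
    have hd : 0 < qbar * σ - qbar := by linarith
    have h1 : q' qbar * (qbar * σ - qbar) ≤ q (qbar * σ) - q qbar := by
      rw [le_div_iff₀ hd] at hslope
      linarith
    -- derivative lower bound at qbar
    have hP : (0:ℝ) < qbar ^ β := Real.rpow_pos_of_pos hqbar0 β
    have hB : (0:ℝ) < qbar ^ (1 - β) := Real.rpow_pos_of_pos hqbar0 (1 - β)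
    have hPB : qbar ^ β * qbar ^ (1 - β) = qbar := by
      rw [← Real.rpow_add hqbar0]
      norm_num
    have hrat := hratio qbar ⟨hqbar0, hqbar1⟩
    have hrat' : c₀ * q qbar ≤ qbar ^ β * q' qbar := by
      rw [le_div_iff₀ hqqbar] at hrat
      linarith
    have hq'lb : c₀ * q qbar * qbar ^ (1 - β) ≤ q' qbar * qbar := by
      have := mul_le_mul_of_nonneg_right hrat' hB.le
      calc c₀ * q qbar * qbar ^ (1 - β) ≤ qbar ^ β * q' qbar * qbar ^ (1 - β) := this
        _ = q' qbar * (qbar ^ β * qbar ^ (1 - β)) := by ring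
        _ = q' qbar * qbar := by rw [hPB]
    have h3 : q m ^ (1 - β) ≤ qbar ^ (1 - β) :=
      Real.rpow_le_rpow hqm.le hqbar_ge (by linarith)
    have h4 : ε₀ / 2 ≤ σ - 1 := by linarith [hσ.1]
    have e1 : c₀ * q qbar * qbar ^ (1 - β) * (σ - 1) ≤ q' qbar * qbar * (σ - 1) :=
      mul_le_mul_of_nonneg_right hq'lb (by linarith)
    have e2 : q m ^ (1 - β) * (ε₀ / 2) ≤ qbar ^ (1 - β) * (σ - 1) :=
      mul_le_mul h3 h4 (by positivity) hB.le
    have e3 : c₀ * q qbar * (q m ^ (1 - β) * (ε₀ / 2))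
        ≤ c₀ * q qbar * (qbar ^ (1 - β) * (σ - 1)) :=
      mul_le_mul_of_nonneg_left e2 (by positivity)
    have h1' : q' qbar * qbar * (σ - 1) ≤ q (qbar * σ) - q qbar := by
      have : q' qbar * (qbar * σ - qbar) = q' qbar * qbar * (σ - 1) := by ring
      linarith [this ▸ h1]
    rw [hAdef]
    nlinarith [e1, e3, h1']
  -- continuity / integrability
  have hqcont : ContinuousOn q (Icc 0 1) := fun s hs =>
    (hq_diff s hs).continuousAt.continuousWithinAt
  have hcont : ContinuousOn (fun σ => Real.log (q (qbar * σ) / q qbar)) (Icc 1 R) := by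
    apply ContinuousOn.log
    · apply ContinuousOn.div_const
      apply hqcont.comp (continuousOn_const.mul continuousOn_id)
      intro σ hσ
      have := hmem σ hσ
      exact ⟨this.1.le, this.2⟩
    · intro σ hσ
      have h1 := hqpos _ (hmem σ hσ)
      positivity
  have hint : IntervalIntegrable (fun σ => Real.log (q (qbar * σ) / q qbar)) volume 1 R := by
    apply ContinuousOn.intervalIntegrable
    rwa [uIcc_of_le hR1.le]
  set c : ℝ := 1 + ε₀ / 2 with hcdef
  have hc1 : (1:ℝ) ≤ c := by rw [hcdef]; linarith
  have hcR : c ≤ R := by rw [hcdef]; linarith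
  have hint1 : IntervalIntegrable (fun σ => Real.log (q (qbar * σ) / q qbar)) volume 1 c :=
    hint.mono_set (by rw [uIcc_of_le hc1, uIcc_of_le hR1.le]; exact Icc_subset_Icc le_rfl hcR)
  have hint2 : IntervalIntegrable (fun σ => Real.log (q (qbar * σ) / q qbar)) volume c R :=
    hint.mono_set (by rw [uIcc_of_le hcR, uIcc_of_le hR1.le]; exact Icc_subset_Icc hc1 le_rfl)
  have hsplit : (∫ σ in (1:ℝ)..R, Real.log (q (qbar * σ) / q qbar))
      = (∫ σ in (1:ℝ)..c, Real.log (q (qbar * σ) / q qbar))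
        + ∫ σ in c..R, Real.log (q (qbar * σ) / q qbar) :=
    (intervalIntegral.integral_add_adjacent_intervals hint1 hint2).symm
  have hI1 : 0 ≤ ∫ σ in (1:ℝ)..c, Real.log (q (qbar * σ) / q qbar) := by
    apply intervalIntegral.integral_nonneg hc1
    intro σ hσ
    have hσ' : σ ∈ Icc (1:ℝ) R := ⟨hσ.1, le_trans hσ.2 hcR⟩
    apply Real.log_nonneg
    rw [le_div_iff₀ hqqbar]
    have := hqmono' σ hσ'
    linarith
  have hI2 : (R - c) * L ≤ ∫ σ in c..R, Real.log (q (qbar * σ) / q qbar) := by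
    have := intervalIntegral.integral_mono_on (f := fun _ => L)
      (g := fun σ => Real.log (q (qbar * σ) / q qbar)) hcR
      intervalIntegrable_const hint2 ?_
    · rwa [intervalIntegral.integral_const, smul_eq_mul] at this
    · intro σ hσ
      have hσ' : σ ∈ Icc c R := hσ
      have hk := hkey σ hσ'
      apply Real.log_le_log (by linarith)
      rw [le_div_iff₀ hqqbar]
      linarith
  have hfinal : ε₀ / 2 * L ≤ (R - c) * L := by
    apply mul_le_mul_of_nonneg_right _ hL0
    rw [hcdef]; linarith
  rw [hsplit]
  linarith
end

section
/- Let (qₙ), (q̄ₙ) be sequences in (0,1] with q̄ₙ ≥ c for a fixed c > 0, and suppose a sequence of nonnegative numbers fₙ := q̄ₙ ∫_1^{qₙ/q̄ₙ} log(q(q̄ₙ σ)/q(q̄ₙ)) dσ tends to 0, where q is convex, C¹, increasing on [0,1] with q(0)=0 and s^β q'(s)/q(s) ≥ c₀ > 0 on (0,1] for some β ∈ [0,1]. Then qₙ/q̄ₙ → 1. -/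
set_option maxHeartbeats 1000000


open Set Filter Real MeasureTheory intervalIntegral

lemma key_log_bound (q q' : ℝ → ℝ) (β c₀ : ℝ)
    (hq_diff : ∀ s ∈ Icc (0:ℝ) 1, HasDerivAt q (q' s) s)
    (hqmono : StrictMonoOn q (Icc 0 1)) (hq0 : q 0 = 0)
    (hβ : β ∈ Icc (0:ℝ) 1) (hc₀ : 0 < c₀)
    (hratio : ∀ s ∈ Ioc (0:ℝ) 1, c₀ ≤ s ^ β * q' s / q s)
    {a b : ℝ} (ha : 0 < a) (hab : a ≤ b) (hb1 : b ≤ 1) :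
    c₀ * (b - a) ≤ Real.log (q b) - Real.log (q a) := by
  have hqpos : ∀ s ∈ Ioc (0:ℝ) 1, 0 < q s := by
    intro s hs
    have := hqmono (by constructor <;> norm_num) ⟨hs.1.le, hs.2⟩ hs.1
    rwa [hq0] at this
  set h : ℝ → ℝ := fun s => Real.log (q s) - c₀ * s with hh
  have hsub : Icc a b ⊆ Icc (0:ℝ) 1 := Icc_subset_Icc ha.le hb1
  have hsub' : Icc a b ⊆ Ioc (0:ℝ) 1 := fun x hx => ⟨lt_of_lt_of_le ha hx.1, le_trans hx.2 hb1⟩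
  have hcont : ContinuousOn h (Icc a b) := by
    apply ContinuousOn.sub
    · apply ContinuousOn.log
      · exact fun x hx => ((hq_diff x (hsub hx)).continuousAt).continuousWithinAt
      · exact fun x hx => (hqpos x (hsub' hx)).ne'
    · exact (continuous_const.mul continuous_id).continuousOn
  have hmono : MonotoneOn h (Icc a b) := by
    apply monotoneOn_of_deriv_nonneg (convex_Icc a b) hcont
    · intro x hx
      rw [interior_Icc] at hx
      have hx' : x ∈ Icc a b := ⟨hx.1.le, hx.2.le⟩
      have hqx := hqpos x (hsub' hx')
      have hd : HasDerivAt h (q' x / q x - c₀) x := by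
        exact ((hq_diff x (hsub hx')).log hqx.ne').sub (by simpa using (hasDerivAt_id x).const_mul c₀)
      exact hd.differentiableAt.differentiableWithinAt
    · intro x hx
      rw [interior_Icc] at hx
      have hx' : x ∈ Icc a b := ⟨hx.1.le, hx.2.le⟩
      have hxI := hsub' hx'
      have hqx := hqpos x hxI
      have hd : HasDerivAt h (q' x / q x - c₀) x :=
        ((hq_diff x (hsub hx')).log hqx.ne').sub (by simpa using (hasDerivAt_id x).const_mul c₀)
      rw [hd.deriv]
      have hr := hratio x hxI
      have hxb : (0:ℝ) < x ^ β := Real.rpow_pos_of_pos hxI.1 β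
      have hxb1 : x ^ β ≤ 1 := Real.rpow_le_one hxI.1.le hxI.2 hβ.1
      have hq'pos : 0 < q' x := by
        by_contra hcon
        push_neg at hcon
        have : x ^ β * q' x / q x ≤ 0 := div_nonpos_of_nonpos_of_nonneg (mul_nonpos_of_nonneg_of_nonpos hxb.le hcon) hqx.le
        linarith
      have : c₀ ≤ q' x / q x := by
        calc c₀ ≤ x ^ β * q' x / q x := hr
        _ ≤ 1 * q' x / q x := by
            apply div_le_div_of_nonneg_right ?_ hqx.le
            exact mul_le_mul_of_nonneg_right hxb1 hq'pos.le
        _ = q' x / q x := by ring_nf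
      linarith
  have := hmono (left_mem_Icc.mpr hab) (right_mem_Icc.mpr hab) hab
  simp only [hh] at this
  linarith

/-- If q is convex, C¹, increasing on [0,1] with q(0)=0, q(1)=1 and
s^β q'(s)/q(s) ≥ c₀ > 0 on (0,1], and (qₙ), (q̄ₙ) ⊂ (0,1] with q̄ₙ ≥ c > 0
are such that fₙ = q̄ₙ ∫_1^{qₙ/q̄ₙ} log(q(q̄ₙσ)/q(q̄ₙ)) dσ ≥ 0 tends to 0,
then qₙ/q̄ₙ → 1. -/
theorem stmt13 (q q' : ℝ → ℝ) (β c₀ c : ℝ) (qn qbarn : ℕ → ℝ)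
    (hq_diff : ∀ s ∈ Icc (0:ℝ) 1, HasDerivAt q (q' s) s)
    (hq'_cont : ContinuousOn q' (Icc 0 1))
    (hqconv : ConvexOn ℝ (Icc 0 1) q)
    (hqmono : StrictMonoOn q (Icc 0 1))
    (hq0 : q 0 = 0) (hq1 : q 1 = 1)
    (hβ : β ∈ Icc (0:ℝ) 1) (hc₀ : 0 < c₀)
    (hratio : ∀ s ∈ Ioc (0:ℝ) 1, c₀ ≤ s ^ β * q' s / q s)
    (hc : 0 < c)
    (hqn : ∀ n, qn n ∈ Ioc (0:ℝ) 1) (hqbarn : ∀ n, qbarn n ∈ Ioc (0:ℝ) 1)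
    (hqbarn_ge : ∀ n, c ≤ qbarn n)
    (hfn_nonneg : ∀ n, 0 ≤ qbarn n *
      ∫ σ in (1:ℝ)..(qn n / qbarn n), Real.log (q (qbarn n * σ) / q (qbarn n)))
    (hfn : Tendsto (fun n => qbarn n *
        ∫ σ in (1:ℝ)..(qn n / qbarn n), Real.log (q (qbarn n * σ) / q (qbarn n)))
      atTop (nhds 0)) :
    Tendsto (fun n => qn n / qbarn n) atTop (nhds 1) := by
  have hqpos : ∀ s ∈ Ioc (0:ℝ) 1, 0 < q s := by
    intro s hs
    have := hqmono (by constructor <;> norm_num) ⟨hs.1.le, hs.2⟩ hs.1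
    rwa [hq0] at this
  have hqcont : ContinuousOn q (Icc 0 1) :=
    fun x hx => (hq_diff x hx).continuousAt.continuousWithinAt
  set r : ℕ → ℝ := fun n => qn n / qbarn n with hrdef
  set K : ℝ := c₀ * c ^ 2 / 2 with hK
  have hKpos : 0 < K := by positivity
  -- linear integral computation
  have hlin : ∀ b u v : ℝ, (∫ σ in u..v, c₀ * b * (σ - 1)) =
      c₀ * b * ((v - 1) ^ 2 / 2 - (u - 1) ^ 2 / 2) := by
    intro b u v
    rw [intervalIntegral.integral_const_mul]
    have h1 : (∫ σ in u..v, (σ - 1)) = (v ^ 2 / 2 - u ^ 2 / 2) - (v - u) := by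
      rw [intervalIntegral.integral_sub intervalIntegrable_id intervalIntegrable_const,
        integral_id, intervalIntegral.integral_const]
      simp [smul_eq_mul]
      ring
    rw [h1]; ring
  -- main pointwise bound on f n
  have hmain : ∀ n, K * (r n - 1) ^ 2 ≤ qbarn n *
      ∫ σ in (1:ℝ)..(r n), Real.log (q (qbarn n * σ) / q (qbarn n)) := by
    intro n
    obtain ⟨hb0, hb1⟩ := hqbarn n
    obtain ⟨hqn0, hqn1⟩ := hqn n
    set b := qbarn n with hbdef
    have hr0 : 0 < r n := div_pos hqn0 hb0
    have hbr : b * r n = qn n := by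
      rw [hrdef]; field_simp; rw [hbdef]; exact div_self hb0.ne'
    have hbr1 : b * r n ≤ 1 := by rw [hbr]; exact hqn1
    have hqbpos : 0 < q b := hqpos b ⟨hb0, hb1⟩
    -- continuity of the integrand
    have hgcont : ContinuousOn (fun σ => Real.log (q (b * σ) / q b)) (uIcc 1 (r n)) := by
      have hmaps : MapsTo (fun σ => b * σ) (uIcc 1 (r n)) (Icc 0 1) := by
        intro σ hσ
        simp only [Set.mem_Icc]
        rcases Set.mem_uIcc.mp hσ with ⟨h1, h2⟩ | ⟨h1, h2⟩ <;>
          constructor <;> nlinarith [hb0, hb1, hbr1, hr0]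
      have hpos : ∀ σ ∈ uIcc 1 (r n), 0 < q (b * σ) := by
        intro σ hσ
        have hm := hmaps hσ
        have : 0 < b * σ := by
          rcases Set.mem_uIcc.mp hσ with ⟨h1, h2⟩ | ⟨h1, h2⟩ <;> nlinarith
        exact hqpos _ ⟨this, hm.2⟩
      apply ContinuousOn.log
      · exact (hqcont.comp ((continuous_const.mul continuous_id).continuousOn) hmaps).div_const _
      · intro σ hσ
        exact (div_pos (hpos σ hσ) hqbpos).ne'
    have hgint : IntervalIntegrable (fun σ => Real.log (q (b * σ) / q b)) volume 1 (r n) :=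
      hgcont.intervalIntegrable
    have hlint : ∀ u v : ℝ, IntervalIntegrable (fun σ => c₀ * b * (σ - 1)) volume u v :=
      fun u v => ((continuous_const.mul (continuous_id.sub continuous_const))).intervalIntegrable u v
    -- key bound on the integral
    have hIb : c₀ * b * ((r n - 1) ^ 2 / 2) ≤
        ∫ σ in (1:ℝ)..(r n), Real.log (q (b * σ) / q b) := by
      rcases le_total 1 (r n) with h1r | hr1
      · have hmono' : ∀ σ ∈ Icc (1:ℝ) (r n),
            c₀ * b * (σ - 1) ≤ Real.log (q (b * σ) / q b) := by
          intro σ hσ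
          have hbσ1 : b * σ ≤ 1 := le_trans (by nlinarith [hσ.2]) hbr1
          have hbleb : b ≤ b * σ := by nlinarith [hσ.1]
          have key := key_log_bound q q' β c₀ hq_diff hqmono hq0 hβ hc₀ hratio hb0 hbleb hbσ1
          have hqσpos : 0 < q (b * σ) := hqpos _ ⟨by nlinarith [hσ.1], hbσ1⟩
          rw [Real.log_div hqσpos.ne' hqbpos.ne']
          nlinarith [key]
        have := intervalIntegral.integral_mono_on h1r (hlint 1 (r n)) hgint hmono'
        calc c₀ * b * ((r n - 1) ^ 2 / 2)
            = ∫ σ in (1:ℝ)..(r n), c₀ * b * (σ - 1) := by rw [hlin]; ring_nf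
          _ ≤ _ := this
      · have hmono' : ∀ σ ∈ Icc (r n) (1:ℝ),
            Real.log (q (b * σ) / q b) ≤ c₀ * b * (σ - 1) := by
          intro σ hσ
          have hbσ0 : 0 < b * σ := by nlinarith [hσ.1, hr0]
          have hbσb : b * σ ≤ b := by nlinarith [hσ.2]
          have key := key_log_bound q q' β c₀ hq_diff hqmono hq0 hβ hc₀ hratio hbσ0 hbσb hb1
          have hqσpos : 0 < q (b * σ) := hqpos _ ⟨hbσ0, le_trans hbσb hb1⟩
          rw [Real.log_div hqσpos.ne' hqbpos.ne']
          nlinarith [key]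
        have hint2 : IntervalIntegrable (fun σ => Real.log (q (b * σ) / q b)) volume (r n) 1 :=
          hgint.symm
        have := intervalIntegral.integral_mono_on hr1 hint2 (hlint (r n) 1) hmono'
        have hsymm : (∫ σ in (1:ℝ)..(r n), Real.log (q (b * σ) / q b)) =
            -∫ σ in (r n)..(1:ℝ), Real.log (q (b * σ) / q b) :=
          intervalIntegral.integral_symm (r n) 1
        rw [hsymm]
        rw [hlin] at this
        nlinarith [this]
    -- conclude
    have hb_ge : c ≤ b := hqbarn_ge n
    have hb2 : c ^ 2 ≤ b ^ 2 := by nlinarith [hb_ge, hc]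
    calc K * (r n - 1) ^ 2 ≤ b * (c₀ * b * ((r n - 1) ^ 2 / 2)) := by
          rw [hK]
          nlinarith [mul_le_mul_of_nonneg_right hb2 (sq_nonneg (r n - 1)), hc₀, sq_nonneg (r n - 1)]
      _ ≤ b * ∫ σ in (1:ℝ)..(r n), Real.log (q (b * σ) / q b) := by
          exact mul_le_mul_of_nonneg_left hIb hb0.le
  -- squeeze
  have h1 : Tendsto (fun n => K * (r n - 1) ^ 2) atTop (nhds 0) :=
    squeeze_zero (fun n => by positivity) hmain hfn
  have h2 : Tendsto (fun n => (r n - 1) ^ 2) atTop (nhds 0) := by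
    have := h1.const_mul K⁻¹
    simp only [mul_zero] at this
    convert this using 2 with n
    field_simp
  have h3 : Tendsto (fun n => |r n - 1|) atTop (nhds 0) := by
    have := h2.sqrt
    simpa [Real.sqrt_sq_eq_abs] using this
  have h4 : Tendsto (fun n => r n - 1) atTop (nhds 0) := by
    apply squeeze_zero_norm _ h3
    intro n
    simp
  have := h4.add_const 1
  simpa using this
end

section
/- Let (aₙ) and (uₙ) be sequences of reals with 0 ≤ uₙ ≤ 1, aₙ → 1, and let u^∞ ∈ (0,1]. Suppose rₙ > 0 with rₙ → u^∞. Then aₙ uₙ log(aₙ uₙ / rₙ) − uₙ log(uₙ/u^∞) → 0, where terms with uₙ = 0 are interpreted as 0. -/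
open Filter Real

/-- Algebraic core of the key lemma: if aₙ → 1, 0 ≤ uₙ ≤ 1, rₙ > 0,
rₙ → u^∞ ∈ (0,1], then aₙuₙ log(aₙuₙ/rₙ) − uₙ log(uₙ/u^∞) → 0
(with the convention 0·log 0 = 0, i.e. Mathlib's `Real.log 0 = 0`). -/
theorem stmt14 (a u r : ℕ → ℝ) (uinf : ℝ)
    (hu : ∀ n, u n ∈ Set.Icc (0:ℝ) 1)
    (hapos : ∀ n, 0 < a n)
    (ha : Tendsto a atTop (nhds 1))
    (hrpos : ∀ n, 0 < r n)
    (huinf : uinf ∈ Set.Ioc (0:ℝ) 1)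
    (hr : Tendsto r atTop (nhds uinf)) :
    Tendsto (fun n =>
        a n * u n * Real.log (a n * u n / r n) - u n * Real.log (u n / uinf))
      atTop (nhds 0) := by
  obtain ⟨huinf0, huinf1⟩ := huinf
  set C : ℝ := 1 + |Real.log uinf| with hC
  have hlog : Tendsto (fun n => Real.log (a n) - Real.log (r n) + Real.log uinf)
      atTop (nhds 0) := by
    have h1 : Tendsto (fun n => Real.log (a n)) atTop (nhds (Real.log 1)) :=
      (Real.continuousAt_log one_ne_zero).tendsto.comp ha
    have h2 : Tendsto (fun n => Real.log (r n)) atTop (nhds (Real.log uinf)) :=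
      (Real.continuousAt_log huinf0.ne').tendsto.comp hr
    have := (h1.sub h2).add (tendsto_const_nhds (x := Real.log uinf))
    simpa using this
  have ha1 : Tendsto (fun n => a n - 1) atTop (nhds 0) := by
    simpa using ha.sub (tendsto_const_nhds (x := (1:ℝ)))
  have hbound : Tendsto
      (fun n => a n * |Real.log (a n) - Real.log (r n) + Real.log uinf| + |a n - 1| * C)
      atTop (nhds 0) := by
    have := (ha.mul hlog.abs).add ((ha1.abs).mul (tendsto_const_nhds (x := C)))
    simpa using this
  apply squeeze_zero_norm _ hbound
  intro n
  obtain ⟨hu0, hu1⟩ := hu n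
  have hCnn : 0 ≤ C := by positivity
  rcases eq_or_lt_of_le hu0 with h0 | h0
  · have han := (hapos n).le
    simp only [← h0, mul_zero, zero_mul, sub_zero, Real.norm_eq_abs, abs_zero]
    positivity
  · have hru : u n ≠ 0 := h0.ne'
    have key : a n * u n * Real.log (a n * u n / r n) - u n * Real.log (u n / uinf)
        = a n * u n * (Real.log (a n) - Real.log (r n) + Real.log uinf)
          + (a n - 1) * (u n * (Real.log (u n) - Real.log uinf)) := by
      rw [Real.log_div (mul_pos (hapos n) h0).ne' (hrpos n).ne', Real.log_mul (hapos n).ne' hru,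
        Real.log_div hru huinf0.ne']
      ring
    rw [key]
    have hb1 : |u n * (Real.log (u n) - Real.log uinf)| ≤ C := by
      have h1 : |u n * Real.log (u n)| ≤ 1 := by
        have := Real.abs_log_mul_self_lt (u n) h0 hu1
        rw [mul_comm] at this
        exact this.le
      have h2 : |u n * Real.log uinf| ≤ |Real.log uinf| := by
        rw [abs_mul]
        calc |u n| * |Real.log uinf| ≤ 1 * |Real.log uinf| := by
              have : |u n| ≤ 1 := by rw [abs_of_nonneg hu0]; exact hu1
              exact mul_le_mul_of_nonneg_right this (abs_nonneg _)
          _ = |Real.log uinf| := one_mul _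
      calc |u n * (Real.log (u n) - Real.log uinf)|
          = |u n * Real.log (u n) - u n * Real.log uinf| := by rw [mul_sub]
        _ ≤ |u n * Real.log (u n)| + |u n * Real.log uinf| := abs_sub _ _
        _ ≤ 1 + |Real.log uinf| := add_le_add h1 h2
    calc ‖a n * u n * (Real.log (a n) - Real.log (r n) + Real.log uinf)
          + (a n - 1) * (u n * (Real.log (u n) - Real.log uinf))‖
        ≤ |a n * u n * (Real.log (a n) - Real.log (r n) + Real.log uinf)|
          + |(a n - 1) * (u n * (Real.log (u n) - Real.log uinf))| := abs_add_le _ _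
      _ ≤ a n * |Real.log (a n) - Real.log (r n) + Real.log uinf| + |a n - 1| * C := by
          refine add_le_add ?_ ?_
          · rw [abs_mul, abs_mul, abs_of_pos (hapos n), abs_of_nonneg hu0]
            calc a n * u n * |Real.log (a n) - Real.log (r n) + Real.log uinf|
                ≤ a n * 1 * |Real.log (a n) - Real.log (r n) + Real.log uinf| := by
                  have := (hapos n).le
                  gcongr
              _ = a n * |Real.log (a n) - Real.log (r n) + Real.log uinf| := by ring
          · rw [abs_mul]
            exact mul_le_mul_of_nonneg_left hb1 (abs_nonneg _)
end
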